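/- Fix $m > 0$, $k \ge 1$. Let $g_k, g_{-k}$ be independent complex Gaussians with mean $0$ and variance $1$, independent of a nonnegative random variable $Y$ with bounded density $P_k$, with $\sup_k \|P_k\|_{L^\infty} \le C_0 < \infty$. Let $\mathcal{A}_m^k \setminus A_m = \{ Y \le m < Y + (|g_k|^2 + |g_{-k}|^2)/\langle k \rangle^2 \}$. Then $\mathbb{P}(\mathcal{A}_m^k \setminus A_m) \le \frac{C}{\langle k \rangle^2}$ for a constant $C$ depending only on $C_0$ (not on $m$ or $k$). -/

import Mathlib

open MeasureTheory ProbabilityTheory Real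

lemma gauss_sq_moment_le :
    ∫⁻ x : ℝ, ENNReal.ofReal (x ^ 2) ∂(gaussianReal 0 (1/2 : NNReal))
      ≤ ENNReal.ofReal 3 := by
  rw [gaussianReal_of_var_ne_zero 0 (by norm_num : (1/2 : NNReal) ≠ 0),
    lintegral_withDensity_eq_lintegral_mul _ (measurable_gaussianPDF _ _)
      (by fun_prop)]
  have hpt : ∀ x : ℝ, (gaussianPDF 0 (1/2 : NNReal) * fun x => ENNReal.ofReal (x ^ 2)) x
      ≤ ENNReal.ofReal (rexp (-(1/2) * x ^ 2)) := by
    intro x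
    simp only [Pi.mul_apply, gaussianPDF, ← ENNReal.ofReal_mul (gaussianPDFReal_nonneg _ _ _)]
    apply ENNReal.ofReal_le_ofReal
    have hcoe : ((1/2 : NNReal) : ℝ) = 1/2 := by norm_num
    rw [gaussianPDFReal, hcoe]
    have h1 : (√(2 * π * (1/2)))⁻¹ ≤ 1 := by
      rw [show (2 * π * (1/2) : ℝ) = π by ring]
      refine inv_le_one_of_one_le₀ ?_
      rw [show (1:ℝ) = √1 by simp]
      exact Real.sqrt_le_sqrt (by nlinarith [Real.pi_gt_three])
    have h2 : x ^ 2 ≤ rexp (x ^ 2 / 2) := by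
      have h3 := Real.add_one_le_exp (x ^ 2 / 4)
      have h4 : rexp (x ^ 2 / 4) * rexp (x ^ 2 / 4) = rexp (x ^ 2 / 2) := by
        rw [← Real.exp_add]; ring_nf
      nlinarith [Real.exp_pos (x ^ 2 / 4), sq_nonneg (1 - x ^ 2 / 4), sq_nonneg x]
    have h5 : rexp (- (x - 0) ^ 2 / (2 * (1/2))) = rexp (-x ^ 2) := by ring_nf
    rw [h5]
    have h6 : x ^ 2 * rexp (-x ^ 2) ≤ rexp (-(1/2) * x ^ 2) := by
      have : rexp (-(1/2) * x ^ 2) = rexp (x ^ 2 / 2) * rexp (-x ^ 2) := by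
        rw [← Real.exp_add]; ring_nf
      rw [this]
      exact mul_le_mul_of_nonneg_right h2 (Real.exp_pos _).le
    calc (√(2 * π * (1/2)))⁻¹ * rexp (-x ^ 2) * x ^ 2
        ≤ 1 * rexp (-x ^ 2) * x ^ 2 := by
          apply mul_le_mul_of_nonneg_right (mul_le_mul_of_nonneg_right h1 (Real.exp_pos _).le)
            (sq_nonneg x)
      _ = x ^ 2 * rexp (-x ^ 2) := by ring
      _ ≤ rexp (-(1/2) * x ^ 2) := h6
  calc ∫⁻ x, (gaussianPDF 0 (1/2 : NNReal) * fun x => ENNReal.ofReal (x ^ 2)) x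
      ≤ ∫⁻ x : ℝ, ENNReal.ofReal (rexp (-(1/2) * x ^ 2)) := lintegral_mono hpt
    _ = ENNReal.ofReal (∫ x : ℝ, rexp (-(1/2) * x ^ 2)) := by
        rw [← ofReal_integral_eq_lintegral_ofReal
          (integrable_exp_neg_mul_sq (by norm_num : (0:ℝ) < 1/2))
          (Filter.Eventually.of_forall fun x => (Real.exp_pos _).le)]
    _ ≤ ENNReal.ofReal 3 := by
        apply ENNReal.ofReal_le_ofReal
        rw [integral_gaussian]
        rw [show (3:ℝ) = √9 by
          rw [show (9:ℝ) = 3 ^ 2 by norm_num, Real.sqrt_sq (by norm_num)]]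
        exact Real.sqrt_le_sqrt (by nlinarith [Real.pi_le_four])

lemma coord_moment_le {Ω : Type} [MeasurableSpace Ω] (P : Measure Ω)
    (f : Ω → ℝ) (hf : Measurable f) (hlaw : P.map f = gaussianReal 0 (1/2 : NNReal)) :
    ∫⁻ ω, ENNReal.ofReal (f ω ^ 2) ∂P ≤ ENNReal.ofReal 3 := by
  have := lintegral_map (μ := P) (f := fun x : ℝ => ENNReal.ofReal (x ^ 2))
    (g := f) (by fun_prop) hf
  rw [← this, hlaw]
  exact gauss_sq_moment_le

/-- Fix `m > 0`, `k ≥ 1`. For independent standard complex Gaussians `gₖ, g₋ₖ`,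
independent of a nonnegative random variable `Y` with density `P_k` bounded by `C₀`,
the event `𝒜ₘᵏ \ Aₘ = {Y ≤ m < Y + (|gₖ|² + |g₋ₖ|²)/⟨k⟩²}` has probability at most
`C/⟨k⟩²` for a constant `C` depending only on `C₀` (not on `m` or `k`). -/
theorem stmt12 (C₀ : ℝ) (hC₀ : 0 < C₀) :
    ∃ C : ℝ, 0 < C ∧
      ∀ {Ω : Type} [MeasurableSpace Ω] (P : Measure Ω) [IsProbabilityMeasure P]
        (m : ℝ), 0 < m → ∀ (k : ℕ), 1 ≤ k →
        ∀ (g₁ g₂ : Ω → ℂ), Measurable g₁ → Measurable g₂ →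
        iIndepFun
          (fun (i : Fin 4) => (match i with
            | 0 => fun ω => (g₁ ω).re
            | 1 => fun ω => (g₁ ω).im
            | 2 => fun ω => (g₂ ω).re
            | 3 => fun ω => (g₂ ω).im : Ω → ℝ)) P →
        (∀ f ∈ ({fun ω => (g₁ ω).re, fun ω => (g₁ ω).im,
            fun ω => (g₂ ω).re, fun ω => (g₂ ω).im} : Set (Ω → ℝ)),
          P.map f = gaussianReal 0 (1/2 : NNReal)) →
        ∀ (Y : Ω → ℝ), Measurable Y → (∀ ω, 0 ≤ Y ω) →
        IndepFun (fun ω => (g₁ ω, g₂ ω)) Y P →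
        ∀ (Pk : ℝ → ℝ),
        P.map Y = volume.withDensity (fun y => ENNReal.ofReal (Pk y)) →
        (∀ y, |Pk y| ≤ C₀) →
        P {ω | Y ω ≤ m ∧
            m < Y ω + (‖g₁ ω‖ ^ 2 + ‖g₂ ω‖ ^ 2) / (1 + (k : ℝ) ^ 2)}
          ≤ ENNReal.ofReal (C / (1 + (k : ℝ) ^ 2)) := by
  refine ⟨12 * C₀, by positivity, ?_⟩
  intro Ω _ P _ m hm k hk g₁ g₂ hg₁ hg₂ _hiIndep hlaw Y hY hY0 hindep Pk hYd hPk
  set K : ℝ := 1 + (k : ℝ) ^ 2 with hKdef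
  have hK : (0:ℝ) < K := by positivity
  set s : ℂ × ℂ → ℝ := fun z => ‖z.1‖ ^ 2 + ‖z.2‖ ^ 2 with hs
  have hsmeas : Measurable s := by fun_prop
  have hs0 : ∀ z, 0 ≤ s z := fun z => by positivity
  set Z : Ω → ℂ × ℂ := fun ω => (g₁ ω, g₂ ω) with hZ
  have hZmeas : Measurable Z := hg₁.prodMk hg₂
  set S : Set ((ℂ × ℂ) × ℝ) := {p | p.2 ≤ m ∧ m < p.2 + s p.1 / K} with hSdef
  have hSmeas : MeasurableSet S := by
    apply MeasurableSet.inter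
    · exact measurableSet_le measurable_snd measurable_const
    · exact measurableSet_lt measurable_const
        (measurable_snd.add ((hsmeas.comp measurable_fst).div_const K))
  have hmapY : IsProbabilityMeasure (P.map Y) := Measure.isProbabilityMeasure_map hY.aemeasurable
  have hmapZ : IsProbabilityMeasure (P.map Z) := Measure.isProbabilityMeasure_map hZmeas.aemeasurable
  have hprod : P.map (fun ω => (Z ω, Y ω)) = (P.map Z).prod (P.map Y) :=
    (indepFun_iff_map_prod_eq_prod_map_map hZmeas.aemeasurable hY.aemeasurable).mp hindep
  have hEv : {ω | Y ω ≤ m ∧ m < Y ω + (‖g₁ ω‖ ^ 2 + ‖g₂ ω‖ ^ 2) / K}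
      = (fun ω => (Z ω, Y ω)) ⁻¹' S := rfl
  rw [hEv, ← Measure.map_apply (hZmeas.prodMk hY) hSmeas, hprod,
    Measure.prod_apply hSmeas]
  have hfiber : ∀ z : ℂ × ℂ, Prod.mk z ⁻¹' S = Set.Ioc (m - s z / K) m := by
    intro z
    ext y
    simp only [Set.mem_preimage, Set.mem_Ioc, hSdef, Set.mem_setOf_eq]
    constructor
    · rintro ⟨h1, h2⟩; exact ⟨by linarith, h1⟩
    · rintro ⟨h1, h2⟩; exact ⟨h2, by linarith⟩
  have hinner : ∀ z : ℂ × ℂ, (P.map Y) (Prod.mk z ⁻¹' S)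
      ≤ (ENNReal.ofReal C₀ * ENNReal.ofReal (1 / K)) * ENNReal.ofReal (s z) := by
    intro z
    rw [hfiber z, hYd, withDensity_apply _ measurableSet_Ioc]
    calc ∫⁻ y in Set.Ioc (m - s z / K) m, ENNReal.ofReal (Pk y)
        ≤ ∫⁻ _ in Set.Ioc (m - s z / K) m, ENNReal.ofReal C₀ := by
          apply setLIntegral_mono measurable_const
          intro y _
          exact ENNReal.ofReal_le_ofReal ((abs_le.mp (hPk y)).2)
      _ = ENNReal.ofReal C₀ * volume (Set.Ioc (m - s z / K) m) := setLIntegral_const _ _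
      _ = ENNReal.ofReal C₀ * ENNReal.ofReal (s z / K) := by
          rw [Real.volume_Ioc]; congr 1; ring
      _ = (ENNReal.ofReal C₀ * ENNReal.ofReal (1 / K)) * ENNReal.ofReal (s z) := by
          rw [show s z / K = s z * (1 / K) by ring,
            ENNReal.ofReal_mul (hs0 z)]
          ring
  calc ∫⁻ z, (P.map Y) (Prod.mk z ⁻¹' S) ∂(P.map Z)
      ≤ ∫⁻ z, (ENNReal.ofReal C₀ * ENNReal.ofReal (1 / K)) * ENNReal.ofReal (s z)
          ∂(P.map Z) := lintegral_mono hinner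
    _ = (ENNReal.ofReal C₀ * ENNReal.ofReal (1 / K))
          * ∫⁻ z, ENNReal.ofReal (s z) ∂(P.map Z) := by
        rw [lintegral_const_mul _ (by fun_prop)]
    _ ≤ (ENNReal.ofReal C₀ * ENNReal.ofReal (1 / K)) * ENNReal.ofReal 12 := by
        gcongr
        have hmap : ∫⁻ z, ENNReal.ofReal (s z) ∂(P.map Z)
            = ∫⁻ ω, ENNReal.ofReal (s (Z ω)) ∂P :=
          lintegral_map (by fun_prop) hZmeas
        rw [hmap]
        have hptw : ∀ ω, ENNReal.ofReal (s (Z ω))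
            = ENNReal.ofReal ((g₁ ω).re ^ 2) + ENNReal.ofReal ((g₁ ω).im ^ 2)
              + (ENNReal.ofReal ((g₂ ω).re ^ 2) + ENNReal.ofReal ((g₂ ω).im ^ 2)) := by
          intro ω
          have h1 : ∀ w : ℂ, ‖w‖ ^ 2 = w.re ^ 2 + w.im ^ 2 := by
            intro w
            rw [Complex.sq_norm, Complex.normSq_apply]; ring
          rw [hs]
          simp only [hZ, h1]
          rw [ENNReal.ofReal_add (by positivity) (by positivity),
            ENNReal.ofReal_add (by positivity) (by positivity),
            ENNReal.ofReal_add (by positivity) (by positivity)]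
        rw [lintegral_congr hptw]
        have m1 := coord_moment_le P (fun ω => (g₁ ω).re) (by fun_prop)
          (hlaw _ (by left; rfl))
        have m2 := coord_moment_le P (fun ω => (g₁ ω).im) (by fun_prop)
          (hlaw _ (by right; left; rfl))
        have m3 := coord_moment_le P (fun ω => (g₂ ω).re) (by fun_prop)
          (hlaw _ (by right; right; left; rfl))
        have m4 := coord_moment_le P (fun ω => (g₂ ω).im) (by fun_prop)
          (hlaw _ (by right; right; right; rfl))
        rw [lintegral_add_left (by fun_prop), lintegral_add_left (by fun_prop),
          lintegral_add_left (by fun_prop)]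
        refine le_trans (add_le_add (add_le_add m1 m2) (add_le_add m3 m4)) ?_
        rw [← ENNReal.ofReal_add (by norm_num) (by norm_num),
          ← ENNReal.ofReal_add (by norm_num) (by norm_num)]
        exact ENNReal.ofReal_le_ofReal (by norm_num)
    _ = ENNReal.ofReal (12 * C₀ / K) := by
        rw [← ENNReal.ofReal_mul hC₀.le, ← ENNReal.ofReal_mul (by positivity)]
        congr 1; ring
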